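/- Let V₁, V₂ be finite-dimensional complex Hilbert spaces and X the antiunitary on V₁ ⊗ V₂ determined by X(ξ ⊗ η) = η̄ ⊗ ξ̄ when V₂ = V̄₁ — more concretely, for V₁ = V₂ = ℂ^n, X(ξ₁ ⊗ ξ₂) = ξ̄₂ ⊗ ξ̄₁. If A ∈ M_n(ℂ) ⊗ M_n(ℂ) satisfies: conjugation by A preserves M_n(ℂ) ⊗ 1 and agrees there with conjugation by γ₁ ⊗ 1, and conjugation by XAX preserves M_n(ℂ) ⊗ 1 and agrees there with conjugation by γ₂ ⊗ 1, where γ₁, γ₂ are self-adjoint unitaries, and A is a self-adjoint unitary, then A = ± γ₁ ⊗ γ₂^T. -/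

import Mathlib

open Matrix
open scoped Kronecker

/-- The antilinear map M ↦ XMX (entrywise conjugate + swap both indices). -/
def swc {n : ℕ} (M : Matrix (Fin n × Fin n) (Fin n × Fin n) ℂ) :
    Matrix (Fin n × Fin n) (Fin n × Fin n) ℂ :=
  Matrix.of fun p q => star (M (p.2, p.1) (q.2, q.1))

lemma swc_apply {n : ℕ} (M : Matrix (Fin n × Fin n) (Fin n × Fin n) ℂ) (p q) :
    swc M p q = star (M (p.2, p.1) (q.2, q.1)) := rfl

lemma swc_mul {n : ℕ} (M N : Matrix (Fin n × Fin n) (Fin n × Fin n) ℂ) :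
    swc (M * N) = swc M * swc N := by
  ext p q
  simp only [swc_apply, Matrix.mul_apply, star_sum, star_mul']
  exact Fintype.sum_equiv (Equiv.prodComm _ _) _ _ (fun s => rfl)

lemma swc_conjTranspose {n : ℕ} (M : Matrix (Fin n × Fin n) (Fin n × Fin n) ℂ) :
    swc (Mᴴ) = (swc M)ᴴ := by
  ext p q
  simp [swc_apply, Matrix.conjTranspose_apply]

lemma swc_kronecker {n : ℕ} (a b : Matrix (Fin n) (Fin n) ℂ) :
    swc (a ⊗ₖ b) = (b.map star) ⊗ₖ (a.map star) := by
  ext p q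
  simp only [swc_apply, Matrix.kroneckerMap_apply, star_mul', Matrix.map_apply,
    Matrix.kroneckerMap_apply]
  ring

lemma map_star_one {n : ℕ} : ((1 : Matrix (Fin n) (Fin n) ℂ).map star) = 1 := by
  ext i j
  simp [Matrix.map_apply, Matrix.one_apply, apply_ite (star : ℂ → ℂ)]

lemma map_star_map_star {n : ℕ} (a : Matrix (Fin n) (Fin n) ℂ) :
    ((a.map star).map star) = a := by
  ext i j; simp [Matrix.map_apply]

lemma map_star_mul {n : ℕ} (a b : Matrix (Fin n) (Fin n) ℂ) :
    ((a * b).map star) = a.map star * b.map star := by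
  ext i j
  simp [Matrix.map_apply, Matrix.mul_apply, star_sum, star_mul']

lemma stdBasis_kron {n : ℕ} (i j k l : Fin n) :
    Matrix.single (i, k) (j, l) (1 : ℂ)
      = Matrix.single i j (1 : ℂ) ⊗ₖ Matrix.single k l (1 : ℂ) := by
  ext ⟨p1, p2⟩ ⟨q1, q2⟩
  simp only [Matrix.single, Matrix.kroneckerMap_apply, Matrix.of_apply, Prod.mk.injEq]
  by_cases h1 : i = p1 <;> by_cases h2 : j = q1 <;> by_cases h3 : k = p2 <;>
    by_cases h4 : l = q2 <;> simp [h1, h2, h3, h4]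

/-- on ℂⁿ ⊗ ℂⁿ with X the antiunitary X(ξ₁ ⊗ ξ₂) = ξ̄₂ ⊗ ξ̄₁ (so that
conjugating a matrix by X gives (XAX)(p,q) = conj (A (swap p) (swap q))): if A is a
self-adjoint unitary whose conjugation action on M_n(ℂ) ⊗ 1 agrees with that of γ₁ ⊗ 1,
and the conjugation action of XAX on M_n(ℂ) ⊗ 1 agrees with that of γ₂ ⊗ 1, for
self-adjoint unitaries γ₁, γ₂, then A = ± γ₁ ⊗ γ₂ᵀ. -/
theorem stmt_13 (n : ℕ)
    (A : Matrix (Fin n × Fin n) (Fin n × Fin n) ℂ)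
    (γ₁ γ₂ : Matrix (Fin n) (Fin n) ℂ)
    (hA : A ∈ Matrix.unitaryGroup (Fin n × Fin n) ℂ) (hAsa : Aᴴ = A)
    (hγ₁sa : γ₁ᴴ = γ₁) (hγ₁u : γ₁ * γ₁ = 1)
    (hγ₂sa : γ₂ᴴ = γ₂) (hγ₂u : γ₂ * γ₂ = 1)
    (XAX : Matrix (Fin n × Fin n) (Fin n × Fin n) ℂ)
    (hXAX : ∀ p q : Fin n × Fin n, XAX p q = star (A (p.2, p.1) (q.2, q.1)))
    (h1 : ∀ a : Matrix (Fin n) (Fin n) ℂ,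
      A * (a ⊗ₖ (1 : Matrix (Fin n) (Fin n) ℂ)) * Aᴴ
        = (γ₁ * a * γ₁) ⊗ₖ (1 : Matrix (Fin n) (Fin n) ℂ))
    (h2 : ∀ a : Matrix (Fin n) (Fin n) ℂ,
      XAX * (a ⊗ₖ (1 : Matrix (Fin n) (Fin n) ℂ)) * XAXᴴ
        = (γ₂ * a * γ₂) ⊗ₖ (1 : Matrix (Fin n) (Fin n) ℂ)) :
    A = γ₁ ⊗ₖ γ₂ᵀ ∨ A = -(γ₁ ⊗ₖ γ₂ᵀ) := by
  rcases Nat.eq_zero_or_pos n with hn | hn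
  · subst hn
    left
    ext p q
    exact absurd p.1.2 (Nat.not_lt_zero _)
  -- basic facts
  have hAA : A * A = 1 := by
    have := hA.2
    rwa [Matrix.star_eq_conjTranspose, hAsa] at this
  set B : Matrix (Fin n × Fin n) (Fin n × Fin n) ℂ := γ₁ ⊗ₖ γ₂ᵀ with hBdef
  have hγ₂t : γ₂ᵀ * γ₂ᵀ = 1 := by
    rw [← Matrix.transpose_mul, hγ₂u, Matrix.transpose_one]
  have hBB : B * B = 1 := by
    rw [hBdef, ← Matrix.mul_kronecker_mul, hγ₁u, hγ₂t, Matrix.one_kronecker_one]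
  have hγ₂m : γ₂.map star = γ₂ᵀ := by
    have : (γ₂ᴴ)ᵀ = γ₂ᵀ := by rw [hγ₂sa]
    rw [← this]
    ext i j
    simp [Matrix.conjTranspose_apply, Matrix.map_apply]
  -- A conjugation on 1 ⊗ b
  have h2' : ∀ b : Matrix (Fin n) (Fin n) ℂ,
      A * ((1 : Matrix (Fin n) (Fin n) ℂ) ⊗ₖ b) * A
        = (1 : Matrix (Fin n) (Fin n) ℂ) ⊗ₖ (γ₂ᵀ * b * γ₂ᵀ) := by
    intro b
    have hswcA : swc XAX = A := by
      ext p q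
      simp [swc_apply, hXAX]
    have := congrArg swc (h2 (b.map star))
    rw [swc_mul, swc_mul, swc_conjTranspose, hswcA, hAsa] at this
    simp only [swc_kronecker, map_star_one, map_star_mul, map_star_map_star, hγ₂m] at this
    exact this
  -- same for B
  have h2B : ∀ b : Matrix (Fin n) (Fin n) ℂ,
      B * ((1 : Matrix (Fin n) (Fin n) ℂ) ⊗ₖ b) * B
        = (1 : Matrix (Fin n) (Fin n) ℂ) ⊗ₖ (γ₂ᵀ * b * γ₂ᵀ) := by
    intro b
    rw [hBdef, ← Matrix.mul_kronecker_mul, ← Matrix.mul_kronecker_mul]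
    simp only [Matrix.mul_one, Matrix.one_mul]
    rw [hγ₁u]
  have h1' : ∀ a : Matrix (Fin n) (Fin n) ℂ,
      A * (a ⊗ₖ (1 : Matrix (Fin n) (Fin n) ℂ)) * A
        = (γ₁ * a * γ₁) ⊗ₖ (1 : Matrix (Fin n) (Fin n) ℂ) := by
    intro a; have := h1 a; rwa [hAsa] at this
  have h1B : ∀ a : Matrix (Fin n) (Fin n) ℂ,
      B * (a ⊗ₖ (1 : Matrix (Fin n) (Fin n) ℂ)) * B
        = (γ₁ * a * γ₁) ⊗ₖ (1 : Matrix (Fin n) (Fin n) ℂ) := by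
    intro a
    rw [hBdef, ← Matrix.mul_kronecker_mul, ← Matrix.mul_kronecker_mul]
    simp only [Matrix.mul_one, Matrix.one_mul]
    rw [hγ₂t]
  -- D = B * A commutes with everything
  have hcomm : ∀ M : Matrix (Fin n × Fin n) (Fin n × Fin n) ℂ,
      (A * M * A = B * M * B) → B * A * M = M * (B * A) := by
    intro M e
    calc B * A * M = B * A * M * (A * A) := by rw [hAA, mul_one]
      _ = B * (A * M * A) * A := by simp only [mul_assoc]
      _ = B * (B * M * B) * A := by rw [e]
      _ = B * B * (M * (B * A)) := by simp only [mul_assoc]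
      _ = M * (B * A) := by rw [hBB, one_mul]
  have hcomm1 : ∀ a, B * A * (a ⊗ₖ (1 : Matrix (Fin n) (Fin n) ℂ))
      = (a ⊗ₖ (1 : Matrix (Fin n) (Fin n) ℂ)) * (B * A) := fun a =>
    hcomm _ (by rw [h1' a, h1B a])
  have hcomm2 : ∀ b, B * A * ((1 : Matrix (Fin n) (Fin n) ℂ) ⊗ₖ b)
      = ((1 : Matrix (Fin n) (Fin n) ℂ) ⊗ₖ b) * (B * A) := fun b =>
    hcomm _ (by rw [h2' b, h2B b])
  have hscalar : B * A ∈ Set.range (Matrix.scalar (Fin n × Fin n)) := by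
    rw [Matrix.mem_range_scalar_iff_commute_single']
    rintro ⟨i, k⟩ ⟨j, l⟩
    have hsplit : Matrix.single (i, k) (j, l) (1 : ℂ)
        = (Matrix.single i j (1 : ℂ) ⊗ₖ (1 : Matrix (Fin n) (Fin n) ℂ))
          * ((1 : Matrix (Fin n) (Fin n) ℂ) ⊗ₖ Matrix.single k l (1 : ℂ)) := by
      rw [stdBasis_kron, ← Matrix.mul_kronecker_mul, Matrix.mul_one, Matrix.one_mul]
    show _ * _ = _ * _
    rw [hsplit]
    calc Matrix.single i j (1:ℂ) ⊗ₖ (1 : Matrix (Fin n) (Fin n) ℂ)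
          * ((1 : Matrix (Fin n) (Fin n) ℂ) ⊗ₖ Matrix.single k l (1:ℂ)) * (B * A)
        = Matrix.single i j (1:ℂ) ⊗ₖ (1 : Matrix (Fin n) (Fin n) ℂ)
          * (B * A * ((1 : Matrix (Fin n) (Fin n) ℂ) ⊗ₖ Matrix.single k l (1:ℂ))) := by
            rw [hcomm2]
            simp only [mul_assoc]
      _ = B * A * (Matrix.single i j (1:ℂ) ⊗ₖ (1 : Matrix (Fin n) (Fin n) ℂ)
          * ((1 : Matrix (Fin n) (Fin n) ℂ) ⊗ₖ Matrix.single k l (1:ℂ))) := by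
            rw [← mul_assoc, ← hcomm1]
            simp only [mul_assoc]
  obtain ⟨c, hc⟩ := hscalar
  have hD : B * A = c • (1 : Matrix (Fin n × Fin n) (Fin n × Fin n) ℂ) := by
    rw [← hc, Matrix.scalar_apply, Matrix.smul_one_eq_diagonal]
  have hAB : A = c • B := by
    have : B * (B * A) = B * (c • 1) := by rw [hD]
    rwa [← mul_assoc, hBB, one_mul, Matrix.mul_smul, mul_one] at this
  have hcc : c * c = 1 := by
    have e : (c * c) • (1 : Matrix (Fin n × Fin n) (Fin n × Fin n) ℂ) = 1 := by
      have := hAA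
      rw [hAB, Matrix.smul_mul, Matrix.mul_smul, smul_smul] at this
      rwa [hBB] at this
    have hne : Nonempty (Fin n × Fin n) := ⟨(⟨0, hn⟩, ⟨0, hn⟩)⟩
    obtain ⟨p⟩ := hne
    have := congrFun (congrFun e p) p
    simpa [Matrix.one_apply] using this
  rcases mul_self_eq_one_iff.mp hcc with h | h
  · left; rw [hAB, h, one_smul]
  · right; rw [hAB, h, neg_smul, one_smul]
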